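/- Let T = {(Ōy, y) : y ∈ F_2^t} where Ō is the t×t anti-identity matrix over F_2 (zeros on the diagonal, ones elsewhere), with t even. Then for (x,y) drawn uniformly from T, the probability that h(x) = h(y) equals 1/2 + 2^{-t}·binomial(t, t/2) when t/2 is odd. -/

import Mathlib

open Finset

private lemma even_iff_cast_zmod2 (n : ℕ) : Even n ↔ ((n : ZMod 2) = 0) := by
  rw [ZMod.natCast_eq_zero_iff]; exact even_iff_two_dvd

private lemma zmod2_cases (a : ZMod 2) : a = 0 ∨ a = 1 := by fin_cases a <;> [exact Or.inl rfl; exact Or.inr rfl]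

private lemma sum_eq_norm {t : ℕ} (y : Fin t → ZMod 2) :
    (∑ j, y j) = (hammingNorm y : ZMod 2) := by
  rw [hammingNorm, ← Finset.sum_filter_ne_zero univ]
  rw [Finset.sum_congr rfl (fun j hj => ?_), Finset.sum_const, nsmul_eq_mul, mul_one]
  rcases zmod2_cases (y j) with h | h
  · exfalso; simp [h] at hj
  · exact h

private lemma norm_count {t k : ℕ} :
    ((univ : Finset (Fin t → ZMod 2)).filter (fun y => hammingNorm y = k)).card
      = t.choose k := by
  have hp := Finset.card_powersetCard k (univ : Finset (Fin t))
  simp only [Finset.card_univ, Fintype.card_fin] at hp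
  rw [← hp]
  apply Finset.card_bij (fun y _ => ({j | y j ≠ 0} : Finset (Fin t)))
  · intro y hy
    simp only [Finset.mem_filter] at hy
    rw [Finset.mem_powersetCard]
    exact ⟨Finset.subset_univ _, hy.2⟩
  · intro y1 h1 y2 h2 h
    funext i
    have := Finset.ext_iff.mp h i
    simp only [Finset.mem_filter, Finset.mem_univ, true_and] at this
    rcases zmod2_cases (y1 i) with ha | ha <;> rcases zmod2_cases (y2 i) with hb | hb <;>
      simp_all
  · intro S hS
    rw [Finset.mem_powersetCard] at hS
    refine ⟨fun i => if i ∈ S then 1 else 0, ?_, ?_⟩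
    · have hfil : ({j | (if j ∈ S then (1 : ZMod 2) else 0) ≠ 0} : Finset (Fin t)) = S := by
        ext j; by_cases hj : j ∈ S <;> simp [hj]
      simp only [Finset.mem_filter, Finset.mem_univ, true_and, hammingNorm]
      rw [hfil]; exact hS.2
    · ext j; by_cases hj : j ∈ S <;> simp [hj]

/-- For the anti-identity matrix `Ō` over `F₂` (zeros on the diagonal, ones
elsewhere), with `t` even and `t/2` odd, the probability over uniform `y ∈ F₂^t`
(equivalently, over uniform `(x,y) ∈ T = {(Ōy, y)}`) that `h(Ōy) = h(y)` equals
`1/2 + 2^{-t}·binom(t, t/2)`. -/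
theorem stmt_17 (t : ℕ) (ht : Even t) (ht2 : Odd (t / 2)) :
    ((univ.filter (fun y : Fin t → ZMod 2 =>
        hammingNorm ((Matrix.of fun i j : Fin t =>
          if i = j then (0 : ZMod 2) else 1).mulVec y) = hammingNorm y)).card : ℚ)
        / 2 ^ t
      = 1 / 2 + (t.choose (t / 2) : ℚ) / 2 ^ t := by
  have htpos : 0 < t := by
    rcases Nat.eq_zero_or_pos t with h | h
    · subst h; simp at ht2
    · exact h
  -- Step 1: compute `mulVec`
  have key : ∀ y : Fin t → ZMod 2, ∀ i,
      (Matrix.of fun i j : Fin t => if i = j then (0 : ZMod 2) else 1).mulVec y i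
        = (∑ j, y j) + y i := by
    intro y i
    simp only [Matrix.mulVec, dotProduct, Matrix.of_apply, ite_mul, zero_mul, one_mul]
    have h1 : ∀ j, (if i = j then (0 : ZMod 2) else y j)
        = y j + (if i = j then y j else 0) := by
      intro j
      split
      · rw [CharTwo.add_self_eq_zero]
      · rw [add_zero]
    simp_rw [h1]
    rw [Finset.sum_add_distrib, Finset.sum_ite_eq univ i y, if_pos (Finset.mem_univ i)]
  -- Step 2: the defining condition is equivalent to `Even (h y) ∨ h y = t/2`
  have cond : ∀ y : Fin t → ZMod 2,
      (hammingNorm ((Matrix.of fun i j : Fin t =>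
          if i = j then (0 : ZMod 2) else 1).mulVec y) = hammingNorm y)
        ↔ (Even (hammingNorm y) ∨ hammingNorm y = t / 2) := by
    intro y
    have hle : hammingNorm y ≤ t := by
      simpa using hammingNorm_le_card_fintype (x := y)
    by_cases hev : Even (hammingNorm y)
    · have hS : (∑ j, y j) = 0 := by
        rw [sum_eq_norm]; exact (even_iff_cast_zmod2 _).mp hev
      have : (Matrix.of fun i j : Fin t => if i = j then (0 : ZMod 2) else 1).mulVec y = y := by
        funext i; rw [key y i, hS, zero_add]
      rw [this]; simp [hev]
    · have hS : (∑ j, y j) = 1 := by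
        rw [sum_eq_norm]
        rcases zmod2_cases ((hammingNorm y : ZMod 2)) with h | h
        · exact absurd ((even_iff_cast_zmod2 _).mpr h) hev
        · exact h
      have hfun : (Matrix.of fun i j : Fin t => if i = j then (0 : ZMod 2) else 1).mulVec y
          = fun i => 1 + y i := by
        funext i; rw [key y i, hS]
      have hnorm : hammingNorm (fun i => 1 + y i) = t - hammingNorm y := by
        have hcompl : (univ.filter fun i : Fin t => (1 : ZMod 2) + y i ≠ 0)
            = (univ.filter fun i : Fin t => ¬ (y i ≠ 0)) := by
          ext i
          rcases zmod2_cases (y i) with h | h <;> simp [h] <;> decide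
        rw [hammingNorm, hammingNorm, hcompl]
        have := Finset.card_filter_add_card_filter_not
          (s := (univ : Finset (Fin t))) (p := fun i => y i ≠ 0)
        simp only [Finset.card_univ, Fintype.card_fin] at this
        omega
      rw [hfun, hnorm]
      have htev := Nat.even_iff.mp ht
      constructor
      · intro h; right; omega
      · rintro (h | h)
        · exact absurd h hev
        · omega
  -- Step 3: rewrite the filter
  rw [Finset.filter_congr (fun y _ => by rw [cond y]), Finset.filter_or]
  have hdisj : Disjoint
      ((univ : Finset (Fin t → ZMod 2)).filter (fun y => Even (hammingNorm y)))
      ((univ : Finset (Fin t → ZMod 2)).filter (fun y => hammingNorm y = t / 2)) := by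
    rw [Finset.disjoint_filter]
    intro y _ hy h
    rw [h] at hy
    exact (Nat.not_even_iff_odd.mpr ht2) hy
  rw [Finset.card_union_of_disjoint hdisj]
  -- Step 4: count the even-weight vectors
  have heven : ((univ : Finset (Fin t → ZMod 2)).filter
      (fun y => Even (hammingNorm y))).card = 2 ^ (t - 1) := by
    set i0 : Fin t := ⟨0, htpos⟩
    set F : (Fin t → ZMod 2) → (Fin t → ZMod 2) :=
      fun y => Function.update y i0 (y i0 + 1) with hF
    have hFsum : ∀ y : Fin t → ZMod 2, (∑ j, F y j) = (∑ j, y j) + 1 := by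
      intro y
      rw [hF]
      rw [Finset.sum_update_of_mem (Finset.mem_univ i0)]
      rw [← Finset.add_sum_erase univ y (Finset.mem_univ i0), Finset.erase_eq]
      ring
    have hFF : ∀ y, F (F y) = y := by
      intro y
      rw [hF]
      simp only [Function.update_self, Function.update_idem]
      have h11 : y i0 + 1 + 1 = y i0 := by
        rcases zmod2_cases (y i0) with h | h <;> rw [h] <;> decide
      rw [h11]
      exact Function.update_eq_self i0 y
    have hFpar : ∀ y : Fin t → ZMod 2,
        (Even (hammingNorm (F y)) ↔ ¬ Even (hammingNorm y)) := by
      intro y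
      rw [even_iff_cast_zmod2, even_iff_cast_zmod2, ← sum_eq_norm, ← sum_eq_norm, hFsum]
      rcases zmod2_cases (∑ j, y j) with h | h <;> simp [h] <;> decide
    have hcards : ((univ : Finset (Fin t → ZMod 2)).filter
        (fun y => Even (hammingNorm y))).card
        = ((univ : Finset (Fin t → ZMod 2)).filter
        (fun y => ¬ Even (hammingNorm y))).card := by
      apply Finset.card_bij' (fun y _ => F y) (fun y _ => F y)
      · intro y hy
        simp only [Finset.mem_filter, Finset.mem_univ, true_and] at hy ⊢
        rw [Nat.not_even_iff_odd, ← Nat.not_even_iff_odd] at *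
        rw [hFpar]; simpa using hy
      · intro y hy
        simp only [Finset.mem_filter, Finset.mem_univ, true_and] at hy ⊢
        have := hFpar (F y)
        rw [hFF y] at this
        tauto
      · intro y _; exact hFF y
      · intro y _; exact hFF y
    have htotal := Finset.card_filter_add_card_filter_not
      (s := (univ : Finset (Fin t → ZMod 2))) (p := fun y => Even (hammingNorm y))
    have hcard_univ : (univ : Finset (Fin t → ZMod 2)).card = 2 ^ t := by
      simp [Finset.card_univ]
    have hpow : 2 ^ t = 2 * 2 ^ (t - 1) := by
      rw [← pow_succ']
      congr 1
      omega
    omega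
  rw [heven, norm_count]
  -- Step 5: arithmetic
  have hpowQ : (2 : ℚ) ^ t = 2 * 2 ^ (t - 1) := by
    rw [← pow_succ']
    congr 1
    omega
  have h2 : (2 : ℚ) ^ (t - 1) ≠ 0 := by positivity
  push_cast
  rw [hpowQ]
  field_simp
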